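/- Suppose m ≥ 2. Then for every unit r of R there exists a primitive vector v ∈ V with h(v,v) = r. -/

import Mathlib

open MulOpposite

/-- A `*`-hermitian form on a right `A`-module `V` (right modules are encoded as
modules over the opposite ring `Aᵐᵒᵖ`): it is additive and `A`-linear in the second
variable and satisfies `h v u = (h u v)*`. -/
structure HermitianForm (A V : Type*) [Ring A] [StarRing A] [AddCommGroup V]
    [Module Aᵐᵒᵖ V] where
  toFun : V → V → A
  add_right : ∀ u v w : V, toFun u (v + w) = toFun u v + toFun u w
  smul_right : ∀ (a : A) (u v : V), toFun u (op a • v) = toFun u v * a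
  conj_symm : ∀ u v : V, toFun v u = star (toFun u v)

namespace HermitianForm

variable {A V : Type*} [Ring A] [StarRing A] [AddCommGroup V] [Module Aᵐᵒᵖ V]

/-- Non-degeneracy: the map `u ↦ h u -` is a bijection of `V` onto the dual module. -/
def Nondeg (h : HermitianForm A V) : Prop :=
  ∀ φ : V →ₗ[Aᵐᵒᵖ] A, ∃! u : V, ∀ v : V, h.toFun u v = φ v

end HermitianForm

/-- A vector of the free module `V` of rank `m` is primitive if it belongs to a basis. -/
def IsPrimitive (A : Type*) {V : Type*} [Ring A] [AddCommGroup V] [Module Aᵐᵒᵖ V]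
    (m : ℕ) (v : V) : Prop :=
  ∃ (b : Module.Basis (Fin m) Aᵐᵒᵖ V) (i : Fin m), b i = v

section LocalAux
variable {A : Type*} [Ring A] [IsLocalRing A]

lemma aux_mul_eq_one_comm {x y : A} (hxy : x * y = 1) : y * x = 1 := by
  rcases IsLocalRing.isUnit_or_isUnit_of_add_one (a := y * x) (b := 1 - y * x) (by abel) with hyx | hyx
  · obtain ⟨u, hu⟩ := hyx
    have hl : ((↑u⁻¹ : A) * y) * x = 1 := by rw [mul_assoc, ← hu, Units.inv_mul]
    have hy : ((↑u⁻¹ : A) * y) = y := by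
      calc ((↑u⁻¹ : A) * y) = ((↑u⁻¹ : A) * y) * (x * y) := by rw [hxy, mul_one]
        _ = (((↑u⁻¹ : A) * y) * x) * y := by noncomm_ring
        _ = y := by rw [hl, one_mul]
    rw [hy] at hl; exact hl
  · exfalso
    obtain ⟨u, hu⟩ := hyx
    have h0 : (1 - y * x) * y = 0 := by
      rw [sub_mul, one_mul, mul_assoc, hxy, mul_one, sub_self]
    have hy : y = 0 := by
      calc y = ↑u⁻¹ * (↑u * y) := by rw [← mul_assoc, Units.inv_mul, one_mul]
        _ = 0 := by rw [hu, h0, mul_zero]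
    rw [hy, mul_zero] at hxy
    exact zero_ne_one hxy

lemma aux_isUnit_of_mul_eq_one {x y : A} (hxy : x * y = 1) : IsUnit x :=
  ⟨⟨x, y, hxy, aux_mul_eq_one_comm hxy⟩, rfl⟩

lemma aux_isUnit_add {a b : A} (h : IsUnit (a + b)) : IsUnit a ∨ IsUnit b := by
  obtain ⟨u, hu⟩ := h
  have h1 : ((↑u⁻¹ : A) * a) + ((↑u⁻¹ : A) * b) = 1 := by
    rw [← mul_add, ← hu, Units.inv_mul]
  have key : ∀ c : A, IsUnit ((↑u⁻¹ : A) * c) → IsUnit c := by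
    intro c hc
    have : c = ↑u * ((↑u⁻¹ : A) * c) := by rw [← mul_assoc, Units.mul_inv, one_mul]
    rw [this]; exact u.isUnit.mul hc
  rcases IsLocalRing.isUnit_or_isUnit_of_add_one h1 with h' | h'
  · exact Or.inl (key a h')
  · exact Or.inr (key b h')

lemma aux_isUnit_left_of_mul {x y : A} (h : IsUnit (x * y)) : IsUnit x := by
  obtain ⟨u, hu⟩ := h
  have : x * (y * ↑u⁻¹) = 1 := by rw [← mul_assoc, ← hu, Units.mul_inv]
  exact aux_isUnit_of_mul_eq_one this

lemma aux_isUnit_right_of_mul {x y : A} (h : IsUnit (x * y)) : IsUnit y := by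
  obtain ⟨u, hu⟩ := h
  have h1 : ((↑u⁻¹ : A) * x) * y = 1 := by rw [mul_assoc, ← hu, Units.inv_mul]
  exact ⟨⟨y, ↑u⁻¹ * x, aux_mul_eq_one_comm h1, h1⟩, rfl⟩

lemma aux_isUnit_sum {ι : Type*} {s : Finset ι} {f : ι → A}
    (h : IsUnit (∑ i ∈ s, f i)) : ∃ i ∈ s, IsUnit (f i) := by
  classical
  induction s using Finset.induction with
  | empty => rw [Finset.sum_empty] at h; exact absurd (isUnit_zero_iff.mp h) zero_ne_one
  | @insert a s ha ih =>
    rw [Finset.sum_insert ha] at h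
    rcases aux_isUnit_add h with h' | h'
    · exact ⟨a, Finset.mem_insert_self a s, h'⟩
    · obtain ⟨i, hi, hui⟩ := ih h'
      exact ⟨i, Finset.mem_insert_of_mem hi, hui⟩

end LocalAux

section BasisAux
variable {A V : Type*} [Ring A] [AddCommGroup V] [Module Aᵐᵒᵖ V]

/-- Rank-one perturbation of the identity gives a new basis. -/
lemma aux_basis_perturb {m : ℕ} (b : Module.Basis (Fin m) Aᵐᵒᵖ V) (φ : V →ₗ[Aᵐᵒᵖ] Aᵐᵒᵖ) (w : V)
    (hu : IsUnit ((1 : Aᵐᵒᵖ) + φ w)) :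
    ∃ B : Module.Basis (Fin m) Aᵐᵒᵖ V, ∀ j, B j = b j + φ (b j) • w := by
  obtain ⟨u, hu'⟩ := hu
  set T : V →ₗ[Aᵐᵒᵖ] V := LinearMap.id + (LinearMap.toSpanSingleton Aᵐᵒᵖ V w).comp φ with hT
  set α : V →ₗ[Aᵐᵒᵖ] Aᵐᵒᵖ := (LinearMap.toSpanSingleton Aᵐᵒᵖ Aᵐᵒᵖ ↑u⁻¹).comp φ with hα
  set T' : V →ₗ[Aᵐᵒᵖ] V := LinearMap.id - (LinearMap.toSpanSingleton Aᵐᵒᵖ V w).comp α with hT'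
  have hsmul : ∀ (s : Aᵐᵒᵖ), φ (s • w) = s * φ w := by
    intro s; rw [map_smul, smul_eq_mul]
  have hTT' : T.comp T' = LinearMap.id := by
    ext y
    simp only [hT, hT', hα, LinearMap.comp_apply, LinearMap.add_apply, LinearMap.sub_apply,
      LinearMap.id_apply, LinearMap.toSpanSingleton_apply, map_sub, hsmul, smul_eq_mul]
    have h1 : φ y * ↑u⁻¹ * (1 + φ w) = φ y := by
      rw [← hu', mul_assoc, Units.inv_mul, mul_one]
    rw [mul_add, mul_one] at h1
    have h2 := h1.symm
    have h3 : φ y • w = (φ y * ↑u⁻¹) • w + (φ y * ↑u⁻¹ * φ w) • w := by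
      conv_lhs => rw [h2]
      rw [add_smul]
    rw [h3]; abel
  have hT'T : T'.comp T = LinearMap.id := by
    ext y
    simp only [hT, hT', hα, LinearMap.comp_apply, LinearMap.add_apply, LinearMap.sub_apply,
      LinearMap.id_apply, LinearMap.toSpanSingleton_apply, map_add, hsmul, smul_eq_mul]
    have h1 : (φ y + φ y * φ w) * ↑u⁻¹ = φ y := by
      have : φ y + φ y * φ w = φ y * ↑u := by rw [hu', mul_add, mul_one]
      rw [this, mul_assoc, Units.mul_inv, mul_one]
    have h3 : φ y • w = (φ y * ↑u⁻¹) • w + (φ y * φ w * ↑u⁻¹) • w := by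
      conv_lhs => rw [← h1]
      rw [add_mul, add_smul]
    rw [h3]; abel
  refine ⟨b.map (LinearEquiv.ofLinear T T' hTT' hT'T), fun j => ?_⟩
  simp only [Module.Basis.map_apply, LinearEquiv.ofLinear_apply, hT, LinearMap.add_apply,
    LinearMap.id_apply, LinearMap.comp_apply, LinearMap.toSpanSingleton_apply]

end BasisAux

namespace HermitianForm
variable {A V : Type*} [Ring A] [StarRing A] [AddCommGroup V] [Module Aᵐᵒᵖ V]
  (h : HermitianForm A V)

/-- The second slot as a linear map. -/
def auxToLin (u : V) : V →ₗ[Aᵐᵒᵖ] A where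
  toFun := h.toFun u
  map_add' := h.add_right u
  map_smul' a v := by
    show h.toFun u (a • v) = a • h.toFun u v
    rw [← op_unop a, h.smul_right]
    rfl

@[simp] lemma auxToLin_apply (u v : V) : h.auxToLin u v = h.toFun u v := rfl

lemma aux_smul_right' (s : Aᵐᵒᵖ) (u v : V) : h.toFun u (s • v) = h.toFun u v * unop s := by
  rw [← op_unop s, h.smul_right, unop_op]

lemma aux_star_toFun (u v : V) : star (h.toFun u v) = h.toFun v u := (h.conj_symm u v).symm

lemma aux_zero_right (u : V) : h.toFun u 0 = 0 := map_zero (h.auxToLin u)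

lemma aux_add_left (u v w : V) : h.toFun (u + v) w = h.toFun u w + h.toFun v w := by
  rw [h.conj_symm, h.add_right, star_add, aux_star_toFun, aux_star_toFun]

lemma aux_smul_left (a : A) (u v : V) :
    h.toFun (op a • u) v = star a * h.toFun u v := by
  rw [h.conj_symm, h.smul_right, star_mul, aux_star_toFun]

lemma aux_expand {m : ℕ} (c : Module.Basis (Fin m) Aᵐᵒᵖ V) (x u : V) :
    h.toFun x u = ∑ i, h.toFun x (c i) * unop (c.repr u i) := by
  have : h.toFun x u = h.auxToLin x u := rfl
  rw [this]
  conv_lhs => rw [← Module.Basis.sum_repr c u]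
  rw [map_sum]
  refine Finset.sum_congr rfl fun i _ => ?_
  rw [map_smul]
  show (c.repr u i) • h.toFun x (c i) = _
  rfl

end HermitianForm


section Part4
variable {A V : Type*} [Ring A] [StarRing A] [AddCommGroup V] [Module Aᵐᵒᵖ V]

/-- `unop` as an `Aᵐᵒᵖ`-linear map. -/
def auxUnopLin (A : Type*) [Ring A] : Aᵐᵒᵖ →ₗ[Aᵐᵒᵖ] A where
  toFun := unop
  map_add' _ _ := rfl
  map_smul' _ _ := rfl

end Part4


section ResAux
open IsLocalRing Polynomial
variable {R : Type*} [CommRing R] [IsLocalRing R]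

lemma aux_lift (hsq : ∀ x ∈ maximalIdeal R, ∃ y ∈ maximalIdeal R, (1 + y) ^ 2 = 1 + x)
    {d e r a₀ b₀ : R} (hd : IsUnit d) (ha₀ : IsUnit a₀)
    (hmod : d * a₀ ^ 2 + e * b₀ ^ 2 - r ∈ maximalIdeal R) :
    ∃ a : R, IsUnit a ∧ d * a ^ 2 + e * b₀ ^ 2 = r := by
  have hda : IsUnit (d * a₀ ^ 2) := hd.mul (ha₀.pow 2)
  set s : R := r - e * b₀ ^ 2 with hs
  have hsu : IsUnit s := by
    by_contra hns
    have hsmem : s ∈ maximalIdeal R := by rwa [IsLocalRing.mem_maximalIdeal]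
    have hmem : d * a₀ ^ 2 ∈ maximalIdeal R := by
      have heq : d * a₀ ^ 2 = (d * a₀ ^ 2 + e * b₀ ^ 2 - r) + s := by rw [hs]; ring
      rw [heq]; exact Ideal.add_mem _ hmod hsmem
    exact (IsLocalRing.mem_maximalIdeal _).mp hmem hda
  set w : R := ↑hsu.unit⁻¹ with hw
  have hws : w * s = 1 := hsu.val_inv_mul
  have hx : d * a₀ ^ 2 * w - 1 ∈ maximalIdeal R := by
    have heq : d * a₀ ^ 2 * w - 1 = (d * a₀ ^ 2 + e * b₀ ^ 2 - r) * w := by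
      linear_combination hws - w * hs
    rw [heq]
    exact Ideal.mul_mem_right _ _ hmod
  obtain ⟨y, hy, hy2⟩ := hsq _ hx
  rw [add_sub_cancel] at hy2
  have h1y : IsUnit (1 + y) := by
    have hmm : IsUnit ((1 + y) * (1 + y)) := by
      rw [← sq, hy2]; exact hda.mul hsu.unit⁻¹.isUnit
    exact isUnit_of_mul_isUnit_left hmm
  set t : R := ↑h1y.unit⁻¹ with htdef
  have ht : (1 + y) * t = 1 := h1y.mul_val_inv
  refine ⟨a₀ * t, ha₀.mul h1y.unit⁻¹.isUnit, ?_⟩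
  have h3 : d * a₀ ^ 2 = (1 + y) ^ 2 * s := by
    linear_combination (-s) * hy2 + (-(d * a₀ ^ 2)) * hws
  have key : d * (a₀ * t) ^ 2 = s := by
    linear_combination (t ^ 2) * h3 + s * ((1 + y) * t + 1) * ht
  rw [key, hs]; ring
end ResAux

section ResAux2
open IsLocalRing Polynomial
variable {R : Type*} [CommRing R] [IsLocalRing R]

lemma aux_sol [Finite (ResidueField R)] (hodd : Odd (Nat.card (ResidueField R)))
    (hsq : ∀ x ∈ maximalIdeal R, ∃ y ∈ maximalIdeal R, (1 + y) ^ 2 = 1 + x)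
    {d e r : R} (hd : IsUnit d) (he : IsUnit e) (hr : IsUnit r) :
    ∃ a c : R, (IsUnit a ∨ IsUnit c) ∧ d * a ^ 2 + e * c ^ 2 = r := by
  classical
  have : Fintype (ResidueField R) := Fintype.ofFinite _
  have hcard : Fintype.card (ResidueField R) % 2 = 1 := by
    rw [← Nat.card_eq_fintype_card]; exact Nat.odd_iff.mp hodd
  set π := IsLocalRing.residue R with hπ
  have hdz : π d ≠ 0 := (hd.map π).ne_zero
  have hez : π e ≠ 0 := (he.map π).ne_zero
  have hrz : π r ≠ 0 := (hr.map π).ne_zero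
  -- solve mod the maximal ideal
  obtain ⟨x, y, hxy⟩ := FiniteField.exists_root_sum_quadratic
    (f := C (π d) * X ^ 2) (g := C (π e) * X ^ 2 - C (π r))
    (degree_C_mul_X_pow 2 hdz)
    (by
      have h1 : degree (C (π r)) < degree (C (π e) * X ^ 2) := by
        rw [degree_C_mul_X_pow 2 hez]
        exact lt_of_le_of_lt degree_C_le (by norm_num)
      rw [degree_sub_eq_left_of_degree_lt h1, degree_C_mul_X_pow 2 hez]
      rfl)
    hcard
  simp only [eval_sub, eval_mul, eval_C, eval_pow, eval_X] at hxy
  have hsol : π d * x ^ 2 + π e * y ^ 2 = π r := by linear_combination hxy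
  -- not both zero
  have hne : x ≠ 0 ∨ y ≠ 0 := by
    by_contra hc
    push_neg at hc
    rw [hc.1, hc.2] at hsol
    simp at hsol
    exact hrz hsol.symm
  obtain ⟨a₀, ha₀⟩ := IsLocalRing.residue_surjective (R := R) x
  obtain ⟨b₀, hb₀⟩ := IsLocalRing.residue_surjective (R := R) y
  have unit_of_ne : ∀ z : R, π z ≠ 0 → IsUnit z := by
    intro z hz
    by_contra hnz
    exact hz (Ideal.Quotient.eq_zero_iff_mem.mpr ((IsLocalRing.mem_maximalIdeal z).mpr hnz))
  have hmodgen : d * a₀ ^ 2 + e * b₀ ^ 2 - r ∈ maximalIdeal R := by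
    rw [← Ideal.Quotient.eq_zero_iff_mem]
    show π _ = 0
    rw [map_sub, map_add, map_mul, map_mul, map_pow, map_pow, ha₀, hb₀, hsol, sub_self]
  rcases hne with hx0 | hy0
  · have ha₀u : IsUnit a₀ := unit_of_ne a₀ (by rw [ha₀]; exact hx0)
    obtain ⟨a, hau, haeq⟩ := aux_lift hsq hd ha₀u hmodgen
    exact ⟨a, b₀, Or.inl hau, haeq⟩
  · have hb₀u : IsUnit b₀ := unit_of_ne b₀ (by rw [hb₀]; exact hy0)
    have hmod' : e * b₀ ^ 2 + d * a₀ ^ 2 - r ∈ maximalIdeal R := by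
      have heq : e * b₀ ^ 2 + d * a₀ ^ 2 - r = d * a₀ ^ 2 + e * b₀ ^ 2 - r := by ring
      rw [heq]; exact hmodgen
    obtain ⟨c, hcu, hceq⟩ := aux_lift hsq he hb₀u hmod'
    exact ⟨a₀, c, Or.inr hcu, by linear_combination hceq⟩
end ResAux2

section MainAux
variable {A V : Type*} [Ring A] [StarRing A] [IsLocalRing A] [AddCommGroup V] [Module Aᵐᵒᵖ V]

lemma aux_gram_unit (h : HermitianForm A V) (hnd : h.Nondeg)
    {m : ℕ} (c : Module.Basis (Fin m) Aᵐᵒᵖ V) (j₀ : Fin m) :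
    ∃ i, IsUnit (h.toFun (c i) (c j₀)) := by
  obtain ⟨u, hu, -⟩ := hnd ((auxUnopLin A).comp (c.coord j₀))
  have h1 : h.toFun u (c j₀) = 1 := by
    rw [hu (c j₀)]
    simp [auxUnopLin, Module.Basis.coord_apply, Module.Basis.repr_self]
  have h2 : h.toFun (c j₀) u = 1 := by
    rw [h.conj_symm, h1, star_one]
  rw [h.aux_expand c (c j₀) u] at h2
  have h3 : IsUnit (∑ i, h.toFun (c j₀) (c i) * unop (c.repr u i)) := h2 ▸ isUnit_one
  obtain ⟨i, -, hi⟩ := aux_isUnit_sum h3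
  refine ⟨i, ?_⟩
  rw [h.conj_symm]
  exact (aux_isUnit_left_of_mul hi).star

lemma aux_aniso (h : HermitianForm A V) (h2 : IsUnit (2 : A)) {x y : V}
    (hxy : IsUnit (h.toFun x y)) :
    ∃ p q : A, (IsUnit p ∨ IsUnit q) ∧
      IsUnit (h.toFun (op p • x + op q • y) (op p • x + op q • y)) := by
  by_cases hxx : IsUnit (h.toFun x x)
  · refine ⟨1, 0, Or.inl isUnit_one, ?_⟩
    rw [show (op (1:A) • x + op (0:A) • y) = x by simp]
    exact hxx
  by_cases hyy : IsUnit (h.toFun y y)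
  · refine ⟨0, 1, Or.inr isUnit_one, ?_⟩
    rw [show (op (0:A) • x + op (1:A) • y) = y by simp]
    exact hyy
  set d := h.toFun x y with hd
  set q := (↑hxy.unit⁻¹ : A) with hq
  have hdq : d * q = 1 := hxy.mul_val_inv
  refine ⟨1, q, Or.inl isUnit_one, ?_⟩
  rw [show (op (1:A) • x) = x by simp]
  have hyx : h.toFun y x = star d := h.conj_symm x y
  have hqd : star q * star d = 1 := by rw [← star_mul, hdq, star_one]
  have hexp : h.toFun (x + op q • y) (x + op q • y)
      = h.toFun x x + 2 + star q * h.toFun y y * q := by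
    simp only [h.aux_add_left, h.add_right, h.aux_smul_left, h.smul_right]
    rw [hyx, ← mul_assoc, hqd, ← hd, hdq]
    rw [show (2:A) = 1 + 1 from one_add_one_eq_two.symm]
    abel
  by_contra hz
  have h2' : (2:A) = h.toFun (x + op q • y) (x + op q • y)
      + (-(h.toFun x x)) + (-(star q * h.toFun y y * q)) := by
    rw [hexp]; abel
  have h2u : IsUnit (h.toFun (x + op q • y) (x + op q • y)
      + (-(h.toFun x x)) + (-(star q * h.toFun y y * q))) := h2' ▸ h2
  rcases aux_isUnit_add h2u with h' | h'
  · rcases aux_isUnit_add h' with h'' | h''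
    · exact hz h''
    · exact hxx (by simpa using h''.neg)
  · have := h'.neg
    rw [neg_neg] at this
    exact hyy (aux_isUnit_right_of_mul (aux_isUnit_left_of_mul this))

lemma aux_primitive (h : HermitianForm A V) {m : ℕ} (b : Module.Basis (Fin m) Aᵐᵒᵖ V)
    {v u : V} (hvu : IsUnit (h.toFun v u)) : IsPrimitive A m v := by
  have h1 : IsUnit (h.toFun u v) := by
    rw [h.conj_symm]; exact hvu.star
  rw [h.aux_expand b u v] at h1
  obtain ⟨i, -, hi⟩ := aux_isUnit_sum h1
  have hci : IsUnit (unop (b.repr v i)) := aux_isUnit_right_of_mul hi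
  have hcu : IsUnit ((1 : Aᵐᵒᵖ) + (b.coord i) (v - b i)) := by
    have he : (1 : Aᵐᵒᵖ) + (b.coord i) (v - b i) = b.repr v i := by
      rw [Module.Basis.coord_apply, map_sub]
      simp [Module.Basis.repr_self]
    rw [he, ← op_unop (b.repr v i)]
    exact isUnit_op.mpr hci
  obtain ⟨B, hB⟩ := aux_basis_perturb b (b.coord i) (v - b i) hcu
  refine ⟨B, i, ?_⟩
  rw [hB i]
  simp [Module.Basis.coord_apply, Module.Basis.repr_self]
end MainAux

/-- Proposition 3.4: if `m ≥ 2` then every unit of the fixed ring `R` is the length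
of some primitive vector. -/
theorem stmt_8 {A V : Type*} [Ring A] [StarRing A] [IsLocalRing A]
    [AddCommGroup V] [Module Aᵐᵒᵖ V]
    (hcent : ∀ a : A, star a = a → a ∈ Set.center A)
    (h2 : IsUnit (2 : A))
    (R : Type*) [CommRing R] [IsLocalRing R] [Algebra R A]
    (hinj : Function.Injective (algebraMap R A))
    (hfix : ∀ a : A, star a = a ↔ a ∈ Set.range (algebraMap R A))
    [Finite (IsLocalRing.ResidueField R)]
    (hodd : Odd (Nat.card (IsLocalRing.ResidueField R)))
    (hsq : ∀ x ∈ IsLocalRing.maximalIdeal R,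
      ∃ y ∈ IsLocalRing.maximalIdeal R, (1 + y) ^ 2 = 1 + x)
    (m : ℕ) (hm : 2 ≤ m) (b : Module.Basis (Fin m) Aᵐᵒᵖ V)
    (h : HermitianForm A V) (hnd : h.Nondeg) :
    ∀ r : R, IsUnit r →
      ∃ v : V, IsPrimitive A m v ∧ h.toFun v v = algebraMap R A r := by
  intro r hr
  have hstarA : ∀ s : R, star (algebraMap R A s) = algebraMap R A s :=
    fun s => (hfix _).mpr ⟨s, rfl⟩
  have hcentA : ∀ (s : R) (g : A), g * algebraMap R A s = algebraMap R A s * g :=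
    fun s g => (Set.mem_center_iff.mp (hcent _ (hstarA s))).comm g |>.symm ▸ rfl
  -- units of A coming from R are units of R
  have hreflect : ∀ s : R, IsUnit (algebraMap R A s) → IsUnit s := by
    intro s hs
    obtain ⟨u, hu⟩ := hs
    have hinv_fix : star (↑u⁻¹ : A) = (↑u⁻¹ : A) := by
      have hmulinv : algebraMap R A s * (↑u⁻¹ : A) = 1 := by rw [← hu]; exact u.mul_inv
      have h3 : star (↑u⁻¹ : A) * algebraMap R A s = 1 := by
        have hst := congrArg star hmulinv
        rw [star_mul, star_one, hstarA] at hst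
        exact hst
      calc star (↑u⁻¹ : A) = star (↑u⁻¹ : A) * (algebraMap R A s * (↑u⁻¹ : A)) := by
            rw [hmulinv, mul_one]
        _ = (star (↑u⁻¹ : A) * algebraMap R A s) * (↑u⁻¹ : A) := by rw [mul_assoc]
        _ = (↑u⁻¹ : A) := by rw [h3, one_mul]
    obtain ⟨t, ht⟩ := (hfix _).mp hinv_fix
    have hst : algebraMap R A (s * t) = algebraMap R A 1 := by
      rw [map_mul, map_one, ht, ← hu]; exact u.mul_inv
    exact IsUnit.of_mul_eq_one t (hinj hst)
  -- step 1 : an anisotropic vector w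
  have j0 : Fin m := ⟨0, by omega⟩
  obtain ⟨i1, hi1⟩ := aux_gram_unit h hnd b j0
  obtain ⟨p, q, hpq, hwunit0⟩ := aux_aniso h h2 hi1
  obtain ⟨w, hwunit⟩ : ∃ w : V, IsUnit (h.toFun w w) := ⟨_, hwunit0⟩
  have hδfix : star (h.toFun w w) = h.toFun w w := (h.conj_symm w w).symm
  obtain ⟨d, hdmap⟩ := (hfix _).mp hδfix
  have hdu : IsUnit d := hreflect d (by rw [hdmap]; exact hwunit)
  -- step 2 : a basis B with B k = w
  obtain ⟨B, k, hBk⟩ := aux_primitive h b hwunit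
  -- step 3 : orthogonalize the rest of the basis against w
  set eA : A := (↑hwunit.unit⁻¹ : A) with heAdef
  have hδe : h.toFun w w * eA = 1 := hwunit.mul_val_inv
  have heδ : eA * h.toFun w w = 1 := hwunit.val_inv_mul
  set χ : V →ₗ[Aᵐᵒᵖ] Aᵐᵒᵖ :=
    { toFun := fun x => op (eA * h.toFun w x)
      map_add' := by
        intro x y
        simp only [h.add_right, mul_add]
        rw [op_add]
      map_smul' := by
        intro a x
        simp only [RingHom.id_apply]
        rw [h.aux_smul_right', ← mul_assoc]
        rfl } with hχdef
  have hχw : χ w = 1 := by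
    simp only [hχdef, LinearMap.coe_mk, AddHom.coe_mk]
    rw [heδ]
    rfl
  set ψ : V →ₗ[Aᵐᵒᵖ] Aᵐᵒᵖ :=
    χ - (LinearMap.toSpanSingleton Aᵐᵒᵖ Aᵐᵒᵖ (χ w)).comp (B.coord k) with hψdef
  have hψw : ψ w = 0 := by
    simp only [hψdef, LinearMap.sub_apply, LinearMap.comp_apply,
      LinearMap.toSpanSingleton_apply]
    rw [← hBk, Module.Basis.coord_apply, Module.Basis.repr_self]
    simp [hBk]
  obtain ⟨B', hB'⟩ := aux_basis_perturb B (-ψ) w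
    (by rw [LinearMap.neg_apply, hψw, neg_zero, add_zero]; exact isUnit_one)
  have hB'k : B' k = w := by
    rw [hB' k, hBk, LinearMap.neg_apply, hψw, neg_zero, zero_smul, add_zero]
  have horthB' : ∀ j, j ≠ k → h.toFun w (B' j) = 0 := by
    intro j hj
    rw [hB' j]
    have hcoord : (B.coord k) (B j) = 0 := by
      rw [Module.Basis.coord_apply, Module.Basis.repr_self]
      exact Finsupp.single_eq_of_ne hj.symm
    have hψBj : ψ (B j) = χ (B j) := by
      simp only [hψdef, LinearMap.sub_apply, LinearMap.comp_apply,
        LinearMap.toSpanSingleton_apply, hcoord, zero_smul, sub_zero]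
    rw [h.add_right, LinearMap.neg_apply, hψBj, h.aux_smul_right']
    simp only [hχdef, LinearMap.coe_mk, AddHom.coe_mk]
    rw [unop_neg, unop_op, mul_neg, ← mul_assoc, hδe, one_mul, add_neg_cancel]
  -- step 4 : a second anisotropic vector w' orthogonal to w
  have : Nontrivial (Fin m) := Fin.nontrivial_iff_two_le.mpr hm
  obtain ⟨j1, hj1k⟩ := exists_ne k
  obtain ⟨i2, hi2⟩ := aux_gram_unit h hnd B' j1
  have hi2k : i2 ≠ k := by
    intro hik
    rw [hik, hB'k, horthB' j1 hj1k] at hi2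
    exact (by simpa using hi2 : False)
  obtain ⟨p', q', hpq', hw'unit0⟩ := aux_aniso h h2 hi2
  have horth0 : h.toFun w (op p' • B' i2 + op q' • B' j1) = 0 := by
    rw [h.add_right, h.smul_right, h.smul_right,
      horthB' i2 hi2k, horthB' j1 hj1k, zero_mul, zero_mul, add_zero]
  obtain ⟨w', hw'unit, horth⟩ : ∃ w' : V, IsUnit (h.toFun w' w') ∧ h.toFun w w' = 0 :=
    ⟨_, hw'unit0, horth0⟩
  have horth' : h.toFun w' w = 0 := by
    rw [h.conj_symm, horth, star_zero]
  have hδ'fix : star (h.toFun w' w') = h.toFun w' w' := (h.conj_symm w' w').symm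
  obtain ⟨d', hd'map⟩ := (hfix _).mp hδ'fix
  have hd'u : IsUnit d' := hreflect d' (by rw [hd'map]; exact hw'unit)
  -- step 5 : solve the scalar equation
  obtain ⟨a, c, hac, heq⟩ := aux_sol hodd hsq hdu hd'u hr
  set aA : A := algebraMap R A a with haA
  set cA : A := algebraMap R A c with hcA
  have e1 : star aA * (h.toFun w w * aA) = algebraMap R A (d * a ^ 2) := by
    rw [hstarA, ← hdmap, ← haA]
    calc aA * (algebraMap R A d * aA) = aA * (aA * algebraMap R A d) := by
          rw [hcentA a (algebraMap R A d)]
      _ = algebraMap R A (a * a * d) := by rw [← mul_assoc, ← map_mul, ← map_mul]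
      _ = algebraMap R A (d * a ^ 2) := by congr 1; ring
  have e2 : star cA * (h.toFun w' w' * cA) = algebraMap R A (d' * c ^ 2) := by
    rw [hstarA, ← hd'map, ← hcA]
    calc cA * (algebraMap R A d' * cA) = cA * (cA * algebraMap R A d') := by
          rw [hcentA c (algebraMap R A d')]
      _ = algebraMap R A (c * c * d') := by rw [← mul_assoc, ← map_mul, ← map_mul]
      _ = algebraMap R A (d' * c ^ 2) := by congr 1; ring
  have hvv : h.toFun (op aA • w + op cA • w') (op aA • w + op cA • w')
      = algebraMap R A r := by
    simp only [h.aux_add_left, h.add_right, h.aux_smul_left, h.smul_right]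
    rw [horth, horth', zero_mul, zero_mul, mul_zero, mul_zero, add_zero, zero_add,
      e1, e2, ← map_add, heq]
  -- step 6 : primitivity
  refine ⟨op aA • w + op cA • w', ?_, hvv⟩
  rcases hac with hau | hcu
  · have hpair : IsUnit (h.toFun (op aA • w + op cA • w') w) := by
      rw [h.aux_add_left, h.aux_smul_left, h.aux_smul_left, horth', mul_zero, add_zero,
        hstarA]
      exact (hau.map (algebraMap R A)).mul hwunit
    exact aux_primitive h b hpair
  · have hpair : IsUnit (h.toFun (op aA • w + op cA • w') w') := by
      rw [h.aux_add_left, h.aux_smul_left, h.aux_smul_left, horth, mul_zero, zero_add,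
        hstarA]
      exact (hcu.map (algebraMap R A)).mul hw'unit
    exact aux_primitive h b hpair
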